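/- Let f be a Markov interval map and x ∈ E_f. For each i ∈ {1,…,n} there is a unique bounded operator T_i on H_x with T_i δ_y = δ_{(f|_{I_i})^{-1}(y)} for y ∈ R_f(x) ∩ f(I_i) and T_i δ_y = 0 for y ∈ R_f(x) ∖ f(I_i). Its adjoint satisfies T_i* δ_y = δ_{f(y)} if y ∈ I_i and T_i* δ_y = 0 otherwise, and T_i* T_i δ_y = δ_y if y ∈ f(I_i) and 0 otherwise. In particular each T_i is a partial isometry: T_i T_i* T_i = T_i. -/

import Mathlib

open scoped Classical ENNReal

noncomputable section

/-- Partition and branch data for a Markov interval map with `n` Markov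
subintervals.  `cm j` is the point `c_j⁻` and `cp j` is `c_j⁺` (with
`cm 0 = cp 0 = c₀` and `cm n = cp n = c_n`).  `f` is the globally defined map,
`F j` is the branch of `f` on the `j`-th Markov interval (indexed by
`j = 0, …, n-1`, corresponding to the interval `I_{j+1}` of the paper) and
`F' j` is the derivative of that branch. -/
structure MarkovSystem (n : ℕ) where
  cm : ℕ → ℝ
  cp : ℕ → ℝ
  f : ℝ → ℝ
  F : ℕ → ℝ → ℝ
  F' : ℕ → ℝ → ℝ
  two_le : 2 ≤ n
  cm_zero : cm 0 = cp 0
  cm_n : cm n = cp n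
  cm_le_cp : ∀ j ≤ n, cm j ≤ cp j
  cp_lt_cm : ∀ j < n, cp j < cm (j + 1)

namespace MarkovSystem

variable {n : ℕ} (M : MarkovSystem n)

/-- The Markov interval `I_{j+1} = [c_j⁺, c_{j+1}⁻]` (for `j < n`). -/
def Ipart (j : ℕ) : Set ℝ := Set.Icc (M.cp j) (M.cm (j + 1))

/-- The escape interval `E_j = (c_j⁻, c_j⁺)` (for `1 ≤ j ≤ n-1`). -/
def Epart (j : ℕ) : Set ℝ := Set.Ioo (M.cm j) (M.cp j)

/-- The ambient interval `I = [c₀, c_n]`. -/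
def itv : Set ℝ := Set.Icc (M.cm 0) (M.cm n)

/-- The domain of `f`, namely `⋃_{j=1}^n I_j`. -/
def dom : Set ℝ := ⋃ j ∈ Finset.range n, M.Ipart j

/-- The set `Γ` of partition boundary points. -/
def Gamma : Set ℝ := {y | ∃ j ≤ n, y = M.cm j ∨ y = M.cp j}

/-- `q`-fold image of a set under `f`, applying `f` only where it is defined. -/
def iterImage : ℕ → Set ℝ → Set ℝ
  | 0, S => S
  | q + 1, S => M.f '' (iterImage q S ∩ M.dom)

/-- `f^k(x)` is defined, i.e. all earlier iterates lie in the domain. -/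
def definedUpTo (k : ℕ) (x : ℝ) : Prop := ∀ l < k, M.f^[l] x ∈ M.dom

/-- The orbit equivalence relation `R_f`. -/
def Rrel (x y : ℝ) : Prop :=
  ∃ p q : ℕ, M.definedUpTo p x ∧ M.definedUpTo q y ∧ M.f^[p] x = M.f^[q] y

/-- The generalized orbit `R_f(x)` of a point `x ∈ I`. -/
def Rclass (x : ℝ) : Set ℝ := {y | y ∈ M.itv ∧ M.Rrel x y}

/-- The maximal invariant set `Ω_f`. -/
def Omega : Set ℝ := {x | x ∈ M.itv ∧ ∀ k, M.f^[k] x ∈ M.dom}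

/-- The escape set `E_f = I \ Ω_f`. -/
def Esc : Set ℝ := M.itv \ M.Omega

/-- The regular set `Λ_f = Ω_f \ R_f(Γ)`. -/
def Lambda : Set ℝ := {x | x ∈ M.Omega ∧ ∀ γ ∈ M.Gamma, ¬ M.Rrel x γ}

/-- The escape time of a point of the escape set. -/
def tau (x : ℝ) : ℕ := sInf {k | M.f^[k] x ∉ M.dom}

/-- The final escape point `e(x) = f^{τ(x)}(x)`. -/
def e (x : ℝ) : ℝ := M.f^[M.tau x] x

/-- The transition-matrix condition `a_{ij} = 1`, i.e. `f(int I_i) ⊇ int I_j`. -/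
def trans (i j : ℕ) : Prop := interior (M.Ipart j) ⊆ M.F i '' interior (M.Ipart i)

/-- The escape-transition condition `â_{ik} = 1`, i.e. `int I_i ∩ f⁻¹(E_k) ≠ ∅`. -/
def ahat (i k : ℕ) : Prop := (interior (M.Ipart i) ∩ M.F i ⁻¹' M.Epart k).Nonempty

end MarkovSystem

/-- The defining properties (P1)-(P4) of a Markov interval map, together with the
compatibility of the global map `f` with the branches `F j`:  `f` agrees with `F j`
on `I_j` except possibly at a boundary point shared with an adjacent interval,
where `f` is given by one of the two adjacent branches. -/
structure IsMarkov {n : ℕ} (M : MarkovSystem n) : Prop where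
  compat₁ : ∀ j < n, ∀ x ∈ M.Ipart j, (∀ k < n, k ≠ j → x ∉ M.Ipart k) → M.f x = M.F j x
  compat₂ : ∀ x ∈ M.dom, ∃ j, j < n ∧ x ∈ M.Ipart j ∧ M.f x = M.F j x
  maps_into : ∀ j < n, M.F j '' M.Ipart j ⊆ M.itv
  onto : M.itv ⊆ ⋃ j ∈ Finset.range n, M.F j '' M.Ipart j
  markov : ∀ i < n, ∃ S T : Set ℕ, S ⊆ {j | j < n} ∧ T ⊆ {j | 1 ≤ j ∧ j < n} ∧
    M.F i '' M.Ipart i = (⋃ j ∈ S, M.Ipart j) ∪ (⋃ j ∈ T, M.Epart j)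
  deriv : ∀ i < n, ∀ x ∈ M.Ipart i, HasDerivWithinAt (M.F i) (M.F' i x) (M.Ipart i) x
  derivCont : ∀ i < n, ContinuousOn (M.F' i) (M.Ipart i)
  mono : ∀ i < n, StrictMonoOn (M.F i) (M.Ipart i) ∨ StrictAntiOn (M.F i) (M.Ipart i)
  expansive : ∃ b > 1, ∀ i < n, ∀ x ∈ M.Ipart i, b < |M.F' i x|
  aperiodic : ∀ i < n, ∃ q, M.dom ⊆ M.iterImage q (M.Ipart i)

namespace MarkovSystem

variable {n : ℕ} (M : MarkovSystem n)

/-- The Hilbert space `H_x = ℓ²(R_f(x))`. -/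
abbrev Hsp (x : ℝ) : Type _ := lp (fun _ : M.Rclass x => ℂ) 2

/-- The canonical orthonormal basis vector `δ_z` of `H_x`, for `z ∈ R_f(x)`. -/
def dvec {x : ℝ} (z : M.Rclass x) : M.Hsp x := lp.single 2 z 1

/-- `T` is the bounded operator `T_i` on `H_x`, determined on the basis by
`T_i δ_y = δ_{(f|_{I_i})⁻¹(y)}` if `y ∈ f(I_i)` and `T_i δ_y = 0` otherwise. -/
def IsBranchOp (x : ℝ) (i : ℕ) (T : M.Hsp x →L[ℂ] M.Hsp x) : Prop :=
  (∀ z w : M.Rclass x, (w : ℝ) ∈ M.Ipart i → M.F i w = (z : ℝ) →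
      T (M.dvec z) = M.dvec w) ∧
  (∀ z : M.Rclass x, (z : ℝ) ∉ M.F i '' M.Ipart i → T (M.dvec z) = 0)

/-- `Pe` is the rank-one orthogonal projection onto `ℂ δ_{e(x)}`. -/
def IsEscProj (x : ℝ) (Pe : M.Hsp x →L[ℂ] M.Hsp x) : Prop :=
  ∀ z : M.Rclass x, Pe (M.dvec z) = if (z : ℝ) = M.e x then M.dvec z else 0

end MarkovSystem

section Aux

namespace MarkovSystem

variable {n : ℕ} {M : MarkovSystem n}

lemma cp_lt_cm_of_lt {i j : ℕ} (hij : i < j) (hj : j ≤ n) : M.cp i < M.cm j := by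
  induction j with
  | zero => omega
  | succ k ih =>
    rcases Nat.lt_succ_iff_lt_or_eq.mp hij with h' | h'
    · calc M.cp i < M.cm k := ih h' (by omega)
        _ ≤ M.cp k := M.cm_le_cp k (by omega)
        _ < M.cm (k + 1) := M.cp_lt_cm k (by omega)
    · subst h'; exact M.cp_lt_cm i (by omega)

lemma cm_mono {i j : ℕ} (hij : i ≤ j) (hj : j ≤ n) : M.cm i ≤ M.cm j := by
  rcases Nat.lt_or_ge i j with h | h
  · exact le_trans (M.cm_le_cp i (by omega)) (le_of_lt (cp_lt_cm_of_lt h hj))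
  · have : i = j := by omega
    subst this; rfl

lemma cp_mono {i j : ℕ} (hij : i ≤ j) (hj : j ≤ n) : M.cp i ≤ M.cp j := by
  rcases Nat.lt_or_ge i j with h | h
  · exact le_trans (le_of_lt (cp_lt_cm_of_lt h hj)) (M.cm_le_cp j hj)
  · have : i = j := by omega
    subst this; rfl

lemma Ipart_subset_itv {i : ℕ} (hi : i < n) : M.Ipart i ⊆ M.itv := by
  intro w hw
  constructor
  · exact le_trans (le_of_eq M.cm_zero) (le_trans (cp_mono (Nat.zero_le i) (by omega)) hw.1)
  · exact le_trans hw.2 (cm_mono (by omega) le_rfl)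

lemma Ipart_subset_dom {i : ℕ} (hi : i < n) : M.Ipart i ⊆ M.dom := by
  intro w hw
  simp only [dom, Set.mem_iUnion, Finset.mem_range]
  exact ⟨i, hi, hw⟩

lemma injOn_F (hM : IsMarkov M) {i : ℕ} (hi : i < n) : Set.InjOn (M.F i) (M.Ipart i) := by
  rcases hM.mono i hi with h | h
  · exact h.injOn
  · exact h.injOn

/-- An extreme point of the image of a branch is a boundary point in the domain. -/
lemma extreme_mem_gamma (hM : IsMarkov M) {i : ℕ} (hi : i < n) {z : ℝ}
    (hz : z ∈ M.F i '' M.Ipart i)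
    (hext : (∀ u ∈ M.F i '' M.Ipart i, u ≤ z) ∨ (∀ u ∈ M.F i '' M.Ipart i, z ≤ u)) :
    z ∈ M.Gamma ∧ z ∈ M.dom := by
  obtain ⟨S, T, hS, hT, him⟩ := hM.markov i hi
  rw [him] at hz
  rcases hz with hzI | hzE
  · simp only [Set.mem_iUnion] at hzI
    obtain ⟨k, hkS, hzk⟩ := hzI
    have hk : k < n := hS hkS
    constructor
    · rcases hext with hub | hlb
      · have h1 : M.cm (k + 1) ∈ M.F i '' M.Ipart i := by
          rw [him]
          exact Or.inl (Set.mem_iUnion.2 ⟨k, Set.mem_iUnion.2 ⟨hkS,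
            ⟨le_of_lt (M.cp_lt_cm k hk), le_rfl⟩⟩⟩)
        have : z = M.cm (k + 1) := le_antisymm hzk.2 (hub _ h1)
        exact ⟨k + 1, by omega, Or.inl this⟩
      · have h1 : M.cp k ∈ M.F i '' M.Ipart i := by
          rw [him]
          exact Or.inl (Set.mem_iUnion.2 ⟨k, Set.mem_iUnion.2 ⟨hkS,
            ⟨le_rfl, le_of_lt (M.cp_lt_cm k hk)⟩⟩⟩)
        have : z = M.cp k := le_antisymm (hlb _ h1) hzk.1
        exact ⟨k, by omega, Or.inr this⟩
    · exact Ipart_subset_dom hk hzk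
  · exfalso
    simp only [Set.mem_iUnion] at hzE
    obtain ⟨k, hkT, hzk⟩ := hzE
    have hk := hT hkT
    rcases hext with hub | hlb
    · have hm : (z + M.cp k) / 2 ∈ M.F i '' M.Ipart i := by
        rw [him]
        refine Or.inr (Set.mem_iUnion.2 ⟨k, Set.mem_iUnion.2 ⟨hkT, ?_⟩⟩)
        constructor <;> [linarith [hzk.1, hzk.2]; linarith [hzk.2]]
      have := hub _ hm
      linarith [hzk.2]
    · have hm : (M.cm k + z) / 2 ∈ M.F i '' M.Ipart i := by
        rw [him]
        refine Or.inr (Set.mem_iUnion.2 ⟨k, Set.mem_iUnion.2 ⟨hkT, ?_⟩⟩)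
        constructor <;> [linarith [hzk.1]; linarith [hzk.1, hzk.2]]
      have := hlb _ hm
      linarith [hzk.1]

/-- The image of an endpoint of a branch interval is a boundary point in the domain. -/
lemma endpoint_image (hM : IsMarkov M) {i : ℕ} (hi : i < n) {w : ℝ}
    (hw : w = M.cp i ∨ w = M.cm (i + 1)) :
    M.F i w ∈ M.Gamma ∧ M.F i w ∈ M.dom := by
  have hII : M.cp i ≤ M.cm (i + 1) := le_of_lt (M.cp_lt_cm i hi)
  have hwI : w ∈ M.Ipart i := by
    rcases hw with rfl | rfl
    · exact ⟨le_rfl, hII⟩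
    · exact ⟨hII, le_rfl⟩
  refine extreme_mem_gamma hM hi ⟨w, hwI, rfl⟩ ?_
  rcases hM.mono i hi with hm | hm
  · rcases hw with rfl | rfl
    · refine Or.inr ?_
      rintro u ⟨v, hv, rfl⟩
      exact hm.monotoneOn hwI hv hv.1
    · refine Or.inl ?_
      rintro u ⟨v, hv, rfl⟩
      exact hm.monotoneOn hv hwI hv.2
  · rcases hw with rfl | rfl
    · refine Or.inl ?_
      rintro u ⟨v, hv, rfl⟩
      exact hm.antitoneOn hwI hv hv.1
    · refine Or.inr ?_
      rintro u ⟨v, hv, rfl⟩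
      exact hm.antitoneOn hv hwI hv.2

lemma gamma_invariant (hM : IsMarkov M) {γ : ℝ} (hγ : γ ∈ M.Gamma ∧ γ ∈ M.dom) :
    M.f γ ∈ M.Gamma ∧ M.f γ ∈ M.dom := by
  obtain ⟨j, hj, hγj, hfγ⟩ := hM.compat₂ γ hγ.2
  have hend : γ = M.cp j ∨ γ = M.cm (j + 1) := by
    obtain ⟨k, hk, hγk⟩ := hγ.1
    have h1 : M.cp j ≤ γ := hγj.1
    have h2 : γ ≤ M.cm (j + 1) := hγj.2
    rcases hγk with rfl | rfl
    · rcases le_or_gt k j with hkj | hkj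
      · exact Or.inl (le_antisymm
          (le_trans (M.cm_le_cp k hk) (cp_mono hkj (by omega))) h1)
      · exact Or.inr (le_antisymm h2 (cm_mono (by omega) hk))
    · rcases le_or_gt k j with hkj | hkj
      · exact Or.inl (le_antisymm (cp_mono hkj (by omega)) h1)
      · exact Or.inr (le_antisymm h2
          (le_trans (cm_mono (by omega) hk) (M.cm_le_cp k hk)))
  rw [hfγ]
  exact endpoint_image hM hj hend

lemma gamma_omega (hM : IsMarkov M) {γ : ℝ} (hγ : γ ∈ M.Gamma ∧ γ ∈ M.dom) :
    ∀ k, M.f^[k] γ ∈ M.dom := by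
  have H : ∀ k, M.f^[k] γ ∈ M.Gamma ∧ M.f^[k] γ ∈ M.dom := by
    intro k
    induction k with
    | zero => exact hγ
    | succ m ih =>
      rw [Function.iterate_succ_apply']
      exact gamma_invariant hM ih
  exact fun k => (H k).2

lemma rel_gamma_absurd (hM : IsMarkov M) {x z : ℝ} (hx : x ∈ M.Esc)
    (hrel : M.Rrel x z) (hz : z ∈ M.Gamma ∧ z ∈ M.dom) : False := by
  obtain ⟨p, q, hp, hq, heq⟩ := hrel
  refine hx.2 ⟨hx.1, ?_⟩
  intro k
  rcases Nat.lt_or_ge k p with hk | hk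
  · exact hp k hk
  · have hsplit : M.f^[k] x = M.f^[(k - p) + q] z := by
      have h1 : M.f^[k] x = M.f^[k - p] (M.f^[p] x) := by
        rw [← Function.iterate_add_apply, Nat.sub_add_cancel hk]
      rw [h1, heq, ← Function.iterate_add_apply]
    rw [hsplit]
    exact gamma_omega hM hz _

/-- Key lemma: the branch preimage of a point of `R_f(x)` is again in `R_f(x)`. -/
lemma preimage_mem_Rclass (hM : IsMarkov M) {x : ℝ} (hx : x ∈ M.Esc) {i : ℕ}
    (hi : i < n) {z w : ℝ} (hz : z ∈ M.Rclass x) (hw : w ∈ M.Ipart i)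
    (hFw : M.F i w = z) : w ∈ M.Rclass x := by
  have hwdom : w ∈ M.dom := Ipart_subset_dom hi hw
  by_cases hfw : M.f w = z
  · refine ⟨Ipart_subset_itv hi hw, ?_⟩
    obtain ⟨p, q, hp, hq, heq⟩ := hz.2
    refine ⟨p, q + 1, hp, ?_, ?_⟩
    · intro l hl
      cases l with
      | zero => simpa using hwdom
      | succ m =>
        rw [Function.iterate_succ_apply, hfw]
        exact hq m (by omega)
    · rw [Function.iterate_succ_apply, hfw, heq]
  · exfalso
    obtain ⟨j, hj, hwj, hfwj⟩ := hM.compat₂ w hwdom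
    have hji : j ≠ i := by
      intro h
      exact hfw (by rw [hfwj, h, hFw])
    have hend : w = M.cp i ∨ w = M.cm (i + 1) := by
      rcases hji.lt_or_gt with h | h
      · refine Or.inl (le_antisymm ?_ hw.1)
        calc w ≤ M.cm (j + 1) := hwj.2
          _ ≤ M.cm i := cm_mono (by omega) (by omega)
          _ ≤ M.cp i := M.cm_le_cp i (by omega)
      · refine Or.inr (le_antisymm hw.2 ?_)
        calc M.cm (i + 1) ≤ M.cm j := cm_mono (by omega) (by omega)
          _ ≤ M.cp j := M.cm_le_cp j (by omega)
          _ ≤ w := hwj.1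
    have hzg := endpoint_image hM hi hend
    rw [hFw] at hzg
    exact rel_gamma_absurd hM hx hz.2 hzg

lemma toReal_two_pos : 0 < (2 : ℝ≥0∞).toReal := by norm_num

lemma dvec_apply {x : ℝ} (z w : M.Rclass x) :
    (M.dvec z : M.Hsp x) w = if w = z then 1 else 0 := by
  by_cases h : w = z
  · subst h; simp [dvec, lp.single_apply_self]
  · simp [dvec, lp.single_apply_ne _ _ _ h, h]

lemma inner_dvec {x : ℝ} (w : M.Rclass x) (u : M.Hsp x) :
    (inner (𝕜 := ℂ) (M.dvec w) u) = u w := by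
  rw [dvec, lp.inner_single_left, RCLike.inner_apply, map_one, mul_one]

lemma Hsp_ext {x : ℝ} {u v : M.Hsp x} (h : ∀ w, u w = v w) : u = v :=
  lp.ext (funext h)

lemma ext_dvec {x : ℝ} (T₁ T₂ : M.Hsp x →L[ℂ] M.Hsp x)
    (h : ∀ z, T₁ (M.dvec z) = T₂ (M.dvec z)) : T₁ = T₂ := by
  refine ContinuousLinearMap.ext fun f => ?_
  have hs : HasSum (fun w : M.Rclass x => lp.single 2 w (f w)) f :=
    lp.hasSum_single ENNReal.ofNat_ne_top f
  have key : ∀ w : M.Rclass x, T₁ (lp.single 2 w (f w)) = T₂ (lp.single 2 w (f w)) := by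
    intro w
    have h1 : lp.single 2 w (f w) = f w • M.dvec w := by
      rw [dvec, ← lp.single_smul, smul_eq_mul, mul_one]
    rw [h1, map_smul, map_smul, h w]
  have h2 := hs.mapL T₂
  rw [show (fun w : M.Rclass x => T₂ (lp.single 2 w (f w)))
      = fun w : M.Rclass x => T₁ (lp.single 2 w (f w)) from funext fun w => (key w).symm] at h2
  exact (hs.mapL T₁).unique h2

/-- The predicate describing the indices where the branch operator acts nontrivially. -/
def brP (M : MarkovSystem n) (x : ℝ) (i : ℕ) (w : M.Rclass x) : Prop :=
  (w : ℝ) ∈ M.Ipart i ∧ M.F i (w : ℝ) ∈ M.Rclass x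

/-- The underlying function of the branch operator. -/
noncomputable def brFun (M : MarkovSystem n) (x : ℝ) (i : ℕ) (a : M.Hsp x)
    (w : M.Rclass x) : ℂ :=
  if h : brP M x i w then a ⟨M.F i (w : ℝ), h.2⟩ else 0

lemma brFun_bound (hM : IsMarkov M) {i : ℕ} (hi : i < n) {x : ℝ} (a : M.Hsp x) :
    Summable (fun w : M.Rclass x => ‖brFun M x i a w‖ ^ (2 : ℝ≥0∞).toReal) ∧
    ∑' w : M.Rclass x, ‖brFun M x i a w‖ ^ (2 : ℝ≥0∞).toReal ≤
      ∑' z : M.Rclass x, ‖a z‖ ^ (2 : ℝ≥0∞).toReal := by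
  have ht : 0 < (2 : ℝ≥0∞).toReal := toReal_two_pos
  set t := (2 : ℝ≥0∞).toReal with htdef
  have hA : Summable (fun z : M.Rclass x => ‖a z‖ ^ t) := (lp.memℓp a).summable ht
  set D : Set (M.Rclass x) := {w | brP M x i w} with hD
  let e : D → M.Rclass x := fun d => ⟨M.F i (d.1 : ℝ), d.2.2⟩
  have he : Function.Injective e := by
    rintro ⟨d₁, h₁⟩ ⟨d₂, h₂⟩ h
    have h' : M.F i (d₁ : ℝ) = M.F i (d₂ : ℝ) := congrArg Subtype.val h
    exact Subtype.ext (Subtype.ext (injOn_F hM hi h₁.1 h₂.1 h'))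
  have hcomp : ∀ d : D, ‖brFun M x i a ↑d‖ ^ t = ‖a (e d)‖ ^ t := by
    intro d
    rw [brFun, dif_pos (show M.brP x i ↑d from d.2)]
  have hsupp : Function.support (fun w : M.Rclass x => ‖brFun M x i a w‖ ^ t) ⊆ D := by
    intro w hw
    by_contra h
    apply hw
    show ‖brFun M x i a w‖ ^ t = 0
    rw [brFun, dif_neg (show ¬ M.brP x i w from h)]
    simp [Real.zero_rpow ht.ne']
  have hsubt : Summable (fun d : D => ‖brFun M x i a ↑d‖ ^ t) := by
    rw [show (fun d : D => ‖brFun M x i a ↑d‖ ^ t) = fun d : D => ‖a (e d)‖ ^ t from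
      funext hcomp]
    exact hA.comp_injective he
  constructor
  · have h1 := (summable_subtype_iff_indicator (s := D)
      (f := fun w : M.Rclass x => ‖brFun M x i a w‖ ^ t)).mp hsubt
    rwa [Set.indicator_eq_self.mpr hsupp] at h1
  · rw [← tsum_subtype_eq_of_support_subset hsupp]
    calc ∑' d : D, ‖brFun M x i a ↑d‖ ^ t = ∑' d : D, ‖a (e d)‖ ^ t := by
          exact tsum_congr hcomp
      _ ≤ ∑' z : M.Rclass x, ‖a z‖ ^ t :=
          Summable.tsum_le_tsum_of_inj e he (fun c _ => Real.rpow_nonneg (norm_nonneg _) t)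
            (fun d => le_rfl) (hA.comp_injective he) hA

/-- The branch operator as a linear map. -/
noncomputable def brOpLin (hM : IsMarkov M) {i : ℕ} (hi : i < n) (x : ℝ) :
    M.Hsp x →ₗ[ℂ] M.Hsp x where
  toFun a := ⟨brFun M x i a, memℓp_gen (brFun_bound hM hi a).1⟩
  map_add' a b := by
    apply Hsp_ext
    intro w
    show brFun M x i (a + b) w = (⟨brFun M x i a, _⟩ + ⟨brFun M x i b, _⟩ : M.Hsp x) w
    rw [lp.coeFn_add]
    show brFun M x i (a + b) w = brFun M x i a w + brFun M x i b w
    rw [brFun, brFun, brFun]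
    split_ifs with h
    · rw [lp.coeFn_add]; simp
    · simp
  map_smul' c a := by
    apply Hsp_ext
    intro w
    show brFun M x i (c • a) w = (c • (⟨brFun M x i a, _⟩ : M.Hsp x) : M.Hsp x) w
    rw [lp.coeFn_smul]
    show brFun M x i (c • a) w = c • brFun M x i a w
    rw [brFun, brFun]
    split_ifs with h
    · rw [lp.coeFn_smul]; simp
    · simp

/-- The branch operator as a continuous linear map. -/
noncomputable def brOp (hM : IsMarkov M) {i : ℕ} (hi : i < n) (x : ℝ) :
    M.Hsp x →L[ℂ] M.Hsp x :=
  LinearMap.mkContinuous (brOpLin hM hi x) 1 (by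
    intro a
    rw [one_mul]
    apply lp.norm_le_of_tsum_le (toReal_two_pos) (norm_nonneg a)
    rw [lp.norm_rpow_eq_tsum (toReal_two_pos) a]
    exact (brFun_bound hM hi a).2)

lemma brOp_apply (hM : IsMarkov M) {i : ℕ} (hi : i < n) {x : ℝ} (a : M.Hsp x)
    (w : M.Rclass x) : (brOp hM hi x a) w = brFun M x i a w := rfl

lemma brOp_isBranchOp (hM : IsMarkov M) {i : ℕ} (hi : i < n) (x : ℝ) :
    M.IsBranchOp x i (brOp hM hi x) := by
  constructor
  · intro z w hw hFw
    apply Hsp_ext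
    intro w₁
    rw [brOp_apply, brFun, dvec_apply]
    by_cases h1 : w₁ = w
    · subst h1
      have hP : brP M x i w₁ := ⟨hw, by rw [hFw]; exact z.2⟩
      rw [dif_pos hP, if_pos rfl]
      have : (⟨M.F i (w₁ : ℝ), hP.2⟩ : M.Rclass x) = z := Subtype.ext hFw
      rw [this, dvec_apply, if_pos rfl]
    · rw [if_neg h1]
      split_ifs with hP
      · rw [dvec_apply]
        refine if_neg ?_
        intro hcon
        apply h1
        have : M.F i (w₁ : ℝ) = (z : ℝ) := congrArg Subtype.val hcon
        exact Subtype.ext (injOn_F hM hi hP.1 hw (this.trans hFw.symm))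
      · rfl
  · intro z hz
    apply Hsp_ext
    intro w₁
    rw [brOp_apply, brFun]
    have h0 : (0 : M.Hsp x) w₁ = 0 := by rw [lp.coeFn_zero]; rfl
    rw [h0]
    split_ifs with hP
    · rw [dvec_apply]
      exact if_neg fun hcon => hz ⟨(w₁ : ℝ), hP.1, congrArg Subtype.val hcon⟩
    · rfl

end MarkovSystem

end Aux

open ContinuousLinearMap in
/-- For `x ∈ E_f` and each `i`, there is a unique bounded operator `T_i` on
`H_x` with `T_i δ_y = δ_{(f|_{I_i})⁻¹(y)}` for `y ∈ R_f(x) ∩ f(I_i)` and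
`T_i δ_y = 0` otherwise.  Its adjoint satisfies `T_i* δ_y = δ_{f(y)}` if
`y ∈ I_i` and `T_i* δ_y = 0` otherwise, `T_i* T_i δ_y = δ_y` if `y ∈ f(I_i)`
and `0` otherwise; in particular `T_i` is a partial isometry:
`T_i T_i* T_i = T_i`. -/
theorem branch_operator_exists_unique {n : ℕ} (M : MarkovSystem n) (hM : IsMarkov M)
    {x : ℝ} (hx : x ∈ M.Esc) (i : ℕ) (hi : i < n) :
    (∃! T : M.Hsp x →L[ℂ] M.Hsp x, M.IsBranchOp x i T) ∧
    ∀ T : M.Hsp x →L[ℂ] M.Hsp x, M.IsBranchOp x i T →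
      (∀ y z : M.Rclass x, (y : ℝ) ∈ M.Ipart i → M.F i y = (z : ℝ) →
        (adjoint T) (M.dvec y) = M.dvec z) ∧
      (∀ y : M.Rclass x, (y : ℝ) ∉ M.Ipart i → (adjoint T) (M.dvec y) = 0) ∧
      (∀ y : M.Rclass x, (adjoint T * T) (M.dvec y) =
        if (y : ℝ) ∈ M.F i '' M.Ipart i then M.dvec y else 0) ∧
      T * adjoint T * T = T := by
  classical
  have desc : ∀ T : M.Hsp x →L[ℂ] M.Hsp x, M.IsBranchOp x i T → ∀ z : M.Rclass x,
      (∃ w : M.Rclass x, (w : ℝ) ∈ M.Ipart i ∧ M.F i (w : ℝ) = (z : ℝ) ∧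
        T (M.dvec z) = M.dvec w) ∨ ((z : ℝ) ∉ M.F i '' M.Ipart i ∧ T (M.dvec z) = 0) := by
    intro T hT z
    by_cases h : (z : ℝ) ∈ M.F i '' M.Ipart i
    · obtain ⟨w, hwI, hFw⟩ := h
      have hwR : w ∈ M.Rclass x :=
        MarkovSystem.preimage_mem_Rclass hM hx hi z.2 hwI hFw
      exact Or.inl ⟨⟨w, hwR⟩, hwI, hFw, hT.1 z ⟨w, hwR⟩ hwI hFw⟩
    · exact Or.inr ⟨h, hT.2 z h⟩
  have uniq : ∀ T₁ T₂ : M.Hsp x →L[ℂ] M.Hsp x,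
      M.IsBranchOp x i T₁ → M.IsBranchOp x i T₂ → T₁ = T₂ := by
    intro T₁ T₂ h₁ h₂
    apply MarkovSystem.ext_dvec
    intro z
    by_cases h : (z : ℝ) ∈ M.F i '' M.Ipart i
    · obtain ⟨w, hwI, hFw⟩ := h
      have hwR : w ∈ M.Rclass x :=
        MarkovSystem.preimage_mem_Rclass hM hx hi z.2 hwI hFw
      rw [h₁.1 z ⟨w, hwR⟩ hwI hFw, h₂.1 z ⟨w, hwR⟩ hwI hFw]
    · rw [h₁.2 z h, h₂.2 z h]
  constructor
  · exact ⟨MarkovSystem.brOp hM hi x, MarkovSystem.brOp_isBranchOp hM hi x,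
      fun T hT => uniq T _ hT (MarkovSystem.brOp_isBranchOp hM hi x)⟩
  · intro T hT
    have coord : ∀ (u : M.Hsp x) (w : M.Rclass x),
        (adjoint T u) w = inner (𝕜 := ℂ) (T (M.dvec w)) u := by
      intro u w
      rw [← MarkovSystem.inner_dvec w (adjoint T u), adjoint_inner_right]
    have hA1 : ∀ y z : M.Rclass x, (y : ℝ) ∈ M.Ipart i → M.F i (y : ℝ) = (z : ℝ) →
        (adjoint T) (M.dvec y) = M.dvec z := by
      intro y z hy hz
      apply MarkovSystem.Hsp_ext
      intro w
      rw [coord, MarkovSystem.dvec_apply]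
      rcases desc T hT w with ⟨w', hw'I, hw'F, hval⟩ | ⟨hnot, hval⟩
      · rw [hval, MarkovSystem.inner_dvec, MarkovSystem.dvec_apply]
        by_cases hwz : w = z
        · rw [if_pos hwz]
          refine if_pos (Subtype.ext ?_)
          apply MarkovSystem.injOn_F hM hi hw'I hy
          rw [hw'F, hz]
          exact congrArg Subtype.val hwz
        · rw [if_neg hwz]
          refine if_neg fun hcon => hwz (Subtype.ext ?_)
          rw [← hw'F, hcon]
          exact hz
      · rw [hval, inner_zero_left]
        refine (if_neg fun hcon => hnot ?_).symm
        exact ⟨(y : ℝ), hy, by rw [hz]; exact (congrArg Subtype.val hcon).symm⟩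
    have hA2 : ∀ y : M.Rclass x, (y : ℝ) ∉ M.Ipart i → (adjoint T) (M.dvec y) = 0 := by
      intro y hy
      apply MarkovSystem.Hsp_ext
      intro w
      have h0 : (0 : M.Hsp x) w = 0 := by rw [lp.coeFn_zero]; rfl
      rw [coord, h0]
      rcases desc T hT w with ⟨w', hw'I, hw'F, hval⟩ | ⟨hnot, hval⟩
      · rw [hval, MarkovSystem.inner_dvec, MarkovSystem.dvec_apply]
        exact if_neg fun hcon => hy (by rw [← congrArg Subtype.val hcon]; exact hw'I)
      · rw [hval, inner_zero_left]
    have hA3 : ∀ y : M.Rclass x, (adjoint T * T) (M.dvec y) =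
        if (y : ℝ) ∈ M.F i '' M.Ipart i then M.dvec y else 0 := by
      intro y
      rw [ContinuousLinearMap.mul_apply]
      rcases desc T hT y with ⟨w', hw'I, hw'F, hval⟩ | ⟨hnot, hval⟩
      · rw [hval, if_pos ⟨(w' : ℝ), hw'I, hw'F⟩]
        exact hA1 w' y hw'I hw'F
      · rw [hval, map_zero, if_neg hnot]
    refine ⟨hA1, hA2, hA3, ?_⟩
    apply uniq _ _ _ hT
    constructor
    · intro z w hw hFw
      rw [ContinuousLinearMap.mul_apply, ContinuousLinearMap.mul_apply, hT.1 z w hw hFw,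
        hA1 w z hw hFw, hT.1 z w hw hFw]
    · intro z hz
      rw [ContinuousLinearMap.mul_apply, ContinuousLinearMap.mul_apply, hT.2 z hz,
        map_zero, map_zero]
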